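/- Let K ≥ 1, c > 0, and for each k ∈ {1,…,K} let a_k > 0 and P_k > 0. For any τ₁,…,τ_K with τ_k > 0 for all k and Σ_k τ_k = 1, the TDMA sum rate satisfies Σ_{k=1}^K τ_k·[log₂(1 + c) − log₂(1 + c/(1 + a_k·P_k/τ_k))] ≤ log₂(1 + c) − log₂(1 + c/(1 + Σ_{j=1}^K a_j·P_j)), with equality when τ_k = a_k·P_k / Σ_j a_j·P_j for all k. That is, these time-slot durations are optimal. -/

import Mathlib

/-- Optimality of the time-slot durations `τ_k = a_k P_k / Σ_j a_j P_j`: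
for any positive `τ` summing to one, the TDMA sum rate is at most
`log₂(1+c) − log₂(1 + c/(1 + Σ_j a_j P_j))`, with equality at the above
allocation. -/
theorem tdma_slots_optimal (K : ℕ) (hK : 0 < K) (c : ℝ) (hc : 0 < c)
    (a P : Fin K → ℝ) (ha : ∀ k, 0 < a k) (hP : ∀ k, 0 < P k)
    (τ : Fin K → ℝ) (hτ : ∀ k, 0 < τ k) (hsum : ∑ k, τ k = 1) :
    (∑ k, τ k * (Real.logb 2 (1 + c) -
        Real.logb 2 (1 + c / (1 + a k * P k / τ k))) ≤
      Real.logb 2 (1 + c) - Real.logb 2 (1 + c / (1 + ∑ j, a j * P j))) ∧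
    ((∀ k, τ k = a k * P k / ∑ j, a j * P j) →
      ∑ k, τ k * (Real.logb 2 (1 + c) -
          Real.logb 2 (1 + c / (1 + a k * P k / τ k))) =
        Real.logb 2 (1 + c) - Real.logb 2 (1 + c / (1 + ∑ j, a j * P j))) := by
  set S : ℝ := ∑ j, a j * P j with hSdef
  have hS : 0 < S := Finset.sum_pos (fun j _ => mul_pos (ha j) (hP j))
    (Finset.univ_nonempty_iff.2 (Fin.pos_iff_nonempty.mp hK))
  -- the concave function
  set g : ℝ → ℝ := fun x =>
    Real.logb 2 (1 + c) + (Real.log (1 + x) - Real.log (1 + c + x)) / Real.log 2 with hgdef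
  -- key identity
  have key : ∀ x : ℝ, 0 < x →
      Real.logb 2 (1 + c) - Real.logb 2 (1 + c / (1 + x)) = g x := by
    intro x hx
    have h1 : (0:ℝ) < 1 + x := by linarith
    have h2 : (0:ℝ) < 1 + c + x := by linarith
    have hq : 1 + c / (1 + x) = (1 + c + x) / (1 + x) := by
      field_simp
      ring
    rw [hq]
    simp only [hgdef, Real.logb, Real.log_div h2.ne' h1.ne']
    ring
  -- concavity of g on (0, ∞)
  have hcon : ConcaveOn ℝ (Set.Ioi (0:ℝ)) g := by
    have hint : interior (Set.Ioi (0:ℝ)) = Set.Ioi 0 := interior_Ioi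
    refine concaveOn_of_hasDerivWithinAt2_nonpos (convex_Ioi 0)
      (f' := fun x => (1 / (1 + x) - 1 / (1 + c + x)) / Real.log 2)
      (f'' := fun x => (-1 / (1 + x) ^ 2 + 1 / (1 + c + x) ^ 2) / Real.log 2)
      ?_ ?_ ?_ ?_
    · -- continuity
      intro x hx
      have hx0 : (0:ℝ) < x := hx
      have c1 : ContinuousAt (fun y : ℝ => Real.log (1 + y)) x :=
        ContinuousAt.log (by fun_prop) (by positivity)
      have c2 : ContinuousAt (fun y : ℝ => Real.log (1 + c + y)) x :=
        ContinuousAt.log (by fun_prop) (by positivity)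
      exact (continuousAt_const.add ((c1.sub c2).div_const _)).continuousWithinAt
    · rw [hint]
      intro x hx
      have hx0 : (0:ℝ) < x := hx
      have h1 : (1:ℝ) + x ≠ 0 := by positivity
      have h2 : (1:ℝ) + c + x ≠ 0 := by positivity
      have d1 : HasDerivAt (fun y : ℝ => Real.log (1 + y)) (1 / (1 + x)) x := by
        simpa using (((hasDerivAt_id x).const_add 1).log h1)
      have d2 : HasDerivAt (fun y : ℝ => Real.log (1 + c + y)) (1 / (1 + c + x)) x := by
        simpa using (((hasDerivAt_id x).const_add (1 + c)).log h2)
      exact (((d1.sub d2).div_const (Real.log 2)).const_add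
        (Real.logb 2 (1 + c))).hasDerivWithinAt
    · rw [hint]
      intro x hx
      have hx0 : (0:ℝ) < x := hx
      have h1 : (1:ℝ) + x ≠ 0 := by positivity
      have h2 : (1:ℝ) + c + x ≠ 0 := by positivity
      have d1 : HasDerivAt (fun y : ℝ => 1 / (1 + y)) (-1 / (1 + x) ^ 2) x := by
        have := ((hasDerivAt_id x).const_add 1).inv h1
        simpa [one_div, neg_div, Pi.inv_def] using this
      have d2 : HasDerivAt (fun y : ℝ => 1 / (1 + c + y)) (-1 / (1 + c + x) ^ 2) x := by
        have := ((hasDerivAt_id x).const_add (1 + c)).inv h2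
        simpa [one_div, neg_div, Pi.inv_def] using this
      have := (d1.sub d2).div_const (Real.log 2)
      have heq : -1 / (1 + x) ^ 2 - -1 / (1 + c + x) ^ 2
          = -1 / (1 + x) ^ 2 + 1 / (1 + c + x) ^ 2 := by ring
      rw [heq] at this
      exact this.hasDerivWithinAt
    · rw [hint]
      intro x hx
      have hx0 : (0:ℝ) < x := hx
      have h1 : (0:ℝ) < 1 + x := by linarith
      have h2 : (0:ℝ) < 1 + c + x := by linarith
      have hle : 1 / (1 + c + x) ^ 2 ≤ 1 / (1 + x) ^ 2 := by
        apply one_div_le_one_div_of_le (by positivity)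
        nlinarith
      have hlog2 : (0:ℝ) < Real.log 2 := Real.log_pos (by norm_num)
      apply div_nonpos_of_nonpos_of_nonneg _ hlog2.le
      have e1 : -1 / (1 + x) ^ 2 = -(1 / (1 + x) ^ 2) := by ring
      linarith
  -- rewrite the sum using g
  have hterm : ∀ k, τ k * (Real.logb 2 (1 + c) -
      Real.logb 2 (1 + c / (1 + a k * P k / τ k))) = τ k * g (a k * P k / τ k) := by
    intro k
    have h1 := hτ k; have h2 := ha k; have h3 := hP k
    rw [key _ (by positivity)]
  have hrhs : Real.logb 2 (1 + c) - Real.logb 2 (1 + c / (1 + S)) = g S := key S hS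
  constructor
  · -- Jensen
    have hJ := hcon.le_map_sum (t := Finset.univ) (w := τ)
      (p := fun k => a k * P k / τ k)
      (fun k _ => (hτ k).le) hsum
      (fun k _ => by
        have h1 := hτ k; have h2 := ha k; have h3 := hP k
        exact Set.mem_Ioi.2 (by positivity))
    simp only [smul_eq_mul] at hJ
    have hsum2 : ∑ k, τ k * (a k * P k / τ k) = S := by
      rw [hSdef]
      exact Finset.sum_congr rfl fun k _ => mul_div_cancel₀ _ (hτ k).ne'
    rw [hsum2] at hJ
    calc ∑ k, τ k * (Real.logb 2 (1 + c) -
          Real.logb 2 (1 + c / (1 + a k * P k / τ k)))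
        = ∑ k, τ k * g (a k * P k / τ k) := Finset.sum_congr rfl fun k _ => hterm k
      _ ≤ g S := hJ
      _ = _ := hrhs.symm
  · intro hτeq
    have hpk : ∀ k, a k * P k / τ k = S := by
      intro k
      have h0 : a k * P k ≠ 0 := by have := ha k; have := hP k; positivity
      rw [hτeq k, div_div_eq_mul_div, mul_comm (a k * P k) S, mul_div_assoc,
        div_self h0, mul_one]
    calc ∑ k, τ k * (Real.logb 2 (1 + c) -
          Real.logb 2 (1 + c / (1 + a k * P k / τ k)))
        = ∑ k, τ k * (Real.logb 2 (1 + c) - Real.logb 2 (1 + c / (1 + S))) := by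
          refine Finset.sum_congr rfl fun k _ => ?_
          rw [hpk k]
      _ = (∑ k, τ k) * (Real.logb 2 (1 + c) - Real.logb 2 (1 + c / (1 + S))) := by
          rw [Finset.sum_mul]
      _ = _ := by rw [hsum, one_mul]
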